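/- Let r, s, k ≥ 1. Then [x^r, y^s] is a product of two k-th powers in F₂ — i.e. there exist a, b ∈ F₂ with [x^r, y^s] = a^k b^k — if and only if k divides r or k divides s. -/

import Mathlib

open Finset

open scoped commutatorElement

namespace Stmt2Aux

abbrev A : Type := AddMonoidAlgebra ℤ (ℤ × ℤ)

noncomputable def sg (v : ℤ × ℤ) : A := AddMonoidAlgebra.single v 1

lemma sg_mul (v w : ℤ × ℤ) : sg v * sg w = sg (v + w) := by
  simp [sg, AddMonoidAlgebra.single_mul_single]

lemma sg_zero : sg 0 = 1 := rfl

noncomputable def Mt (u p : A) : Matrix (Fin 2) (Fin 2) A := !![u, p; 0, 1]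

lemma Mt_mul (u p u' p' : A) : Mt u p * Mt u' p' = Mt (u * u') (u * p' + p) := by
  simp [Mt, Matrix.mul_fin_two]

lemma Mt_one : Mt 1 0 = 1 := by
  simp [Mt, Matrix.one_fin_two]

noncomputable def Tu (v : ℤ × ℤ) (p : A) : (Matrix (Fin 2) (Fin 2) A)ˣ :=
  ⟨Mt (sg v) p, Mt (sg (-v)) (-(sg (-v) * p)),
   by rw [Mt_mul, mul_neg, ← mul_assoc, sg_mul, add_neg_cancel, sg_zero, one_mul,
     neg_add_cancel, Mt_one],
   by rw [Mt_mul, sg_mul, neg_add_cancel, sg_zero, add_neg_cancel, Mt_one]⟩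


lemma Tu_val (v p) : (Tu v p).val = Mt (sg v) p := rfl

lemma Tu_one : Tu 0 0 = 1 := by
  ext
  rw [Tu_val, sg_zero, Mt_one, Units.val_one]

lemma Tu_mul (v w : ℤ × ℤ) (p q : A) :
    Tu v p * Tu w q = Tu (v + w) (sg v * q + p) := by
  ext
  rw [Units.val_mul, Tu_val, Tu_val, Tu_val, Mt_mul, sg_mul]

lemma Tu_inv (v : ℤ × ℤ) (p : A) :
    (Tu v p)⁻¹ = Tu (-v) (-(sg (-v) * p)) := by
  ext
  rfl

lemma Tu_eq_iff {v w : ℤ × ℤ} {p q : A} (h : Tu v p = Tu w q) : v = w ∧ p = q := by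
  have hval : Mt (sg v) p = Mt (sg w) q := by
    rw [← Tu_val, ← Tu_val, h]
  have h00 : sg v = sg w := congrFun (congrFun hval 0) 0
  have h01 : p = q := congrFun (congrFun hval 0) 1
  refine ⟨?_, h01⟩
  have := AddMonoidAlgebra.single_left_injective (one_ne_zero (α := ℤ)) h00
  exact this

lemma Tu_pow (v : ℤ × ℤ) (p : A) (n : ℕ) :
    (Tu v p) ^ n = Tu (n • v) ((∑ i ∈ range n, sg (i • v)) * p) := by
  induction n with
  | zero => simp [Tu_one]
  | succ n ih =>
      rw [pow_succ', ih, Tu_mul]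
      congr 1
      · rw [succ_nsmul']
      · rw [Finset.sum_range_succ']
        simp only [zero_smul, sg_zero]
        rw [add_mul, one_mul, Finset.sum_mul, Finset.sum_mul, Finset.mul_sum]
        congr 1
        refine Finset.sum_congr rfl fun i _ => ?_
        rw [← mul_assoc, sg_mul, succ_nsmul']


noncomputable def phi : FreeGroup (Fin 2) →* (Matrix (Fin 2) (Fin 2) A)ˣ :=
  FreeGroup.lift (fun i => if i = 0 then Tu (1, 0) 1 else Tu (0, 1) 0)

lemma phi_of0 : phi (FreeGroup.of 0) = Tu (1, 0) 1 := by
  simp [phi]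

lemma phi_of1 : phi (FreeGroup.of 1) = Tu (0, 1) 0 := by
  simp [phi]

lemma exists_Tu (g : FreeGroup (Fin 2)) : ∃ v p, phi g = Tu v p := by
  induction g using FreeGroup.induction_on with
  | C1 => exact ⟨0, 0, by rw [map_one, Tu_one]⟩
  | of i =>
      fin_cases i
      · exact ⟨(1, 0), 1, phi_of0⟩
      · exact ⟨(0, 1), 0, phi_of1⟩
  | inv_of i ih =>
      obtain ⟨v, p, hp⟩ := ih
      exact ⟨-v, -(sg (-v) * p), by rw [map_inv, hp, Tu_inv]⟩
  | mul g h ihg ihh =>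
      obtain ⟨v, p, hp⟩ := ihg
      obtain ⟨w, q, hq⟩ := ihh
      exact ⟨v + w, sg v * q + p, by rw [map_mul, hp, hq, Tu_mul]⟩

lemma comm_Tu (v w : ℤ × ℤ) (p : A) :
    ⁅Tu v p, Tu w 0⁆ = Tu 0 (p - sg w * p) := by
  rw [commutatorElement_def, Tu_mul, Tu_inv, Tu_mul, Tu_inv, Tu_mul]
  congr 1
  · abel
  · rw [mul_zero, neg_zero, mul_zero, zero_add, mul_neg, ← mul_assoc, sg_mul]
    have hvw : v + w + -v = w := by abel
    rw [hvw]
    ring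

lemma key_sum (k : ℕ) (v : ℤ × ℤ) :
    sg (k • v) * (∑ i ∈ range k, sg (i • (-v))) = sg v * ∑ i ∈ range k, sg (i • v) := by
  rw [Finset.mul_sum, Finset.mul_sum, ← Finset.sum_range_reflect (fun i => sg v * sg (i • v)) k]
  refine Finset.sum_congr rfl fun i hi => ?_
  rw [sg_mul, sg_mul]
  congr 1
  have hik : i < k := Finset.mem_range.mp hi
  have hcast : ((k - 1 - i : ℕ) : ℤ) = (k : ℤ) - 1 - i := by omega
  rw [← natCast_zsmul v k, ← natCast_zsmul (-v) i, ← natCast_zsmul v (k - 1 - i), hcast, smul_neg]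
  module

noncomputable def S (r : ℕ) : A := ∑ i ∈ range r, sg ((i : ℤ), 0)

lemma master (r s k : ℕ) (hk : 1 ≤ k) (a b : FreeGroup (Fin 2))
    (h : ⁅FreeGroup.of (0 : Fin 2) ^ r, FreeGroup.of (1 : Fin 2) ^ s⁆ = a ^ k * b ^ k) :
    ∃ (α β : ℤ) (P' : A),
      (∑ i ∈ range k, sg ((i : ℤ) * α, (i : ℤ) * β)) * P' = (1 - sg (0, (s : ℤ))) * S r := by
  obtain ⟨va, P, ha⟩ := exists_Tu a
  obtain ⟨vb, Q, hb⟩ := exists_Tu b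
  have h2 := congrArg phi h
  rw [map_mul, map_pow, map_pow, ha, hb, map_commutatorElement, map_pow, map_pow,
    phi_of0, phi_of1, Tu_pow, Tu_pow, Tu_pow, Tu_pow] at h2
  rw [Finset.sum_mul] at h2
  simp only [mul_zero, Finset.sum_const_zero, zero_mul] at h2
  have hys : (s : ℕ) • ((0 : ℤ), (1 : ℤ)) = ((0 : ℤ), (s : ℤ)) := by
    simp [Prod.smul_def]
  have hxr : (r : ℕ) • ((1 : ℤ), (0 : ℤ)) = ((r : ℤ), (0 : ℤ)) := by
    simp [Prod.smul_def]
  rw [hys, hxr] at h2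
  have hS : (∑ i ∈ range r, sg (i • ((1 : ℤ), (0 : ℤ))) * 1) = S r := by
    rw [S]
    refine Finset.sum_congr rfl fun i _ => ?_
    rw [mul_one]
    congr 1
    simp [Prod.smul_def]
  rw [hS, comm_Tu, Tu_mul] at h2
  obtain ⟨h3, h4⟩ := Tu_eq_iff h2
  -- h3 : 0 = k • va + k • vb  gives vb = -va
  have hvb : vb = -va := by
    have h5 : (k : ℤ) • (va + vb) = 0 := by
      rw [smul_add, natCast_zsmul, natCast_zsmul, ← h3]
    rcases smul_eq_zero.mp h5 with h6 | h6
    · exfalso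
      have : (k : ℤ) ≠ 0 := by exact_mod_cast Nat.one_le_iff_ne_zero.mp hk
      exact this h6
    · exact eq_neg_of_add_eq_zero_right h6
  refine ⟨va.1, va.2, P + sg va * Q, ?_⟩
  rw [sub_mul, one_mul]
  have hconv : ∀ i : ℕ, ((i : ℤ) * va.1, (i : ℤ) * va.2) = i • va := by
    intro i
    simp [Prod.smul_def, nsmul_eq_mul]
  simp_rw [hconv]
  rw [h4, hvb, ← mul_assoc, key_sum]
  ring


noncomputable def evh (z w : ℂˣ) : Multiplicative (ℤ × ℤ) →* ℂ where
  toFun g := (z : ℂ) ^ (Multiplicative.toAdd g).1 * (w : ℂ) ^ (Multiplicative.toAdd g).2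
  map_one' := by simp
  map_mul' a b := by
    show (z : ℂ) ^ (Multiplicative.toAdd a + Multiplicative.toAdd b).1 *
        (w : ℂ) ^ (Multiplicative.toAdd a + Multiplicative.toAdd b).2 = _
    rw [Prod.fst_add, Prod.snd_add, zpow_add₀ z.ne_zero, zpow_add₀ w.ne_zero]
    ring

noncomputable def ev (z w : ℂˣ) : A →ₐ[ℤ] ℂ :=
  AddMonoidAlgebra.lift ℤ ℂ (ℤ × ℤ) (evh z w)

lemma ev_sg (z w : ℂˣ) (v : ℤ × ℤ) :
    ev z w (sg v) = (z : ℂ) ^ v.1 * (w : ℂ) ^ v.2 := by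
  rw [ev, sg, AddMonoidAlgebra.lift_single]
  simp [evh]

lemma ev_identity {k r s : ℕ} {α β : ℤ} {P' : A}
    (h : (∑ i ∈ range k, sg ((i : ℤ) * α, (i : ℤ) * β)) * P' = (1 - sg (0, (s : ℤ))) * S r)
    (z w : ℂˣ) :
    (∑ i ∈ range k, ((z : ℂ) ^ α * (w : ℂ) ^ β) ^ i) * (ev z w P') =
      (1 - (w : ℂ) ^ (s : ℤ)) * ∑ i ∈ range r, (z : ℂ) ^ i := by
  have h2 := congrArg (ev z w) h
  rw [map_mul, map_mul, map_sub, map_one, map_sum] at h2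
  have e1 : ∀ i : ℕ, ev z w (sg ((i : ℤ) * α, (i : ℤ) * β)) = ((z : ℂ) ^ α * (w : ℂ) ^ β) ^ i := by
    intro i
    rw [ev_sg]
    rw [mul_comm (i : ℤ) α, mul_comm (i : ℤ) β, zpow_mul, zpow_mul,
      zpow_natCast, zpow_natCast, mul_pow]
  have e2 : ∀ i : ℕ, ev z w (sg ((i : ℤ), 0)) = (z : ℂ) ^ i := by
    intro i
    rw [ev_sg]
    simp
  have e3 : ev z w (sg (0, (s : ℤ))) = (w : ℂ) ^ (s : ℤ) := by
    rw [ev_sg]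
    simp
  simp only [S, map_sum] at h2
  simp_rw [e1, e2] at h2
  rw [e3] at h2
  exact h2


lemma coeff_rhs {r s : ℕ} (hr : 1 ≤ r) (hs : 1 ≤ s) :
    ((1 - sg (0, (s : ℤ))) * S r).coeff ((0 : ℤ), (s : ℤ)) = -1 := by
  rw [sub_mul, one_mul, S, Finset.mul_sum]
  simp_rw [sg_mul]
  rw [AddMonoidAlgebra.coeff_sub, Finsupp.sub_apply, AddMonoidAlgebra.coeff_sum,
    AddMonoidAlgebra.coeff_sum, Finsupp.finset_sum_apply, Finsupp.finset_sum_apply]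
  have h1 : ∀ i ∈ range r, (sg ((i : ℤ), 0)).coeff ((0 : ℤ), (s : ℤ)) = 0 := by
    intro i _
    rw [sg, AddMonoidAlgebra.coeff_single, Finsupp.single_apply, if_neg]
    intro hcon
    have := congrArg Prod.snd hcon
    simp at this
    omega
  rw [Finset.sum_congr rfl h1, Finset.sum_const, smul_zero, zero_sub, neg_inj]
  have h2 : ∀ i ∈ range r, (sg ((0, (s : ℤ)) + ((i : ℤ), 0))).coeff ((0 : ℤ), (s : ℤ))
      = if i = 0 then 1 else 0 := by
    intro i _
    rw [sg, AddMonoidAlgebra.coeff_single, Finsupp.single_apply]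
    by_cases hi : i = 0
    · subst hi; norm_num
    · rw [if_neg, if_neg hi]
      intro hcon
      have := congrArg Prod.fst hcon
      simp at this
      omega
  rw [Finset.sum_congr rfl h2, Finset.sum_ite_eq' (range r) 0 (fun _ => (1 : ℤ)),
    if_pos (Finset.mem_range.mpr (by omega))]

lemma case00 {k r s : ℕ} (hk : 2 ≤ k) (hr : 1 ≤ r) (hs : 1 ≤ s) {P' : A}
    (h : (∑ i ∈ range k, sg ((i : ℤ) * 0, (i : ℤ) * 0)) * P' = (1 - sg (0, (s : ℤ))) * S r) :
    False := by
  have hν : (∑ i ∈ range k, sg ((i : ℤ) * 0, (i : ℤ) * 0)) = (k : ℕ) • (1 : A) := by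
    rw [Finset.sum_congr rfl fun i _ => ?_, Finset.sum_const, Finset.card_range]
    rw [mul_zero]
    exact sg_zero
  rw [hν, smul_mul_assoc, one_mul] at h
  have hc := congrArg (fun f : A => f.coeff ((0 : ℤ), (s : ℤ))) h
  simp only [AddMonoidAlgebra.coeff_smul, Finsupp.smul_apply] at hc
  rw [coeff_rhs hr hs] at hc
  have : (k : ℤ) ∣ -1 := ⟨P'.coeff ((0 : ℤ), (s : ℤ)), by rw [← hc, nsmul_eq_mul]⟩
  have h1 : (k : ℤ) ∣ 1 := (dvd_neg.mp this)
  have := Int.le_of_dvd one_pos h1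
  omega

lemma flip {k : ℕ} {α β : ℤ} {P' R : A}
    (h : (∑ i ∈ range k, sg ((i : ℤ) * α, (i : ℤ) * β)) * P' = R) :
    ∃ P'' : A, (∑ i ∈ range k, sg ((i : ℤ) * -α, (i : ℤ) * -β)) * P'' = R := by
  refine ⟨sg (((k : ℤ) - 1) * α, ((k : ℤ) - 1) * β) * P', ?_⟩
  rw [← h, ← mul_assoc, Finset.sum_mul]
  congr 1
  rw [← Finset.sum_range_reflect (fun i => sg ((i : ℤ) * α, (i : ℤ) * β)) k]
  refine Finset.sum_congr rfl fun i hi => ?_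
  rw [sg_mul]
  congr 1
  have hik : i < k := Finset.mem_range.mp hi
  have hcast : ((k - 1 - i : ℕ) : ℤ) = (k : ℤ) - 1 - i := by omega
  rw [hcast, Prod.mk_add_mk, Prod.mk.injEq]
  constructor <;> ring


lemma caseA {k r s : ℕ} (hk : 2 ≤ k) (hs : 1 ≤ s) {α : ℤ} (hα : 0 < α) {P' : A}
    (h : (∑ i ∈ range k, sg ((i : ℤ) * α, (i : ℤ) * 0)) * P' = (1 - sg (0, (s : ℤ))) * S r) :
    k ∣ r := by
  set n := k * α.toNat with hn_def
  have hn : 0 < n := Nat.mul_pos (by omega) (by omega)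
  have hη := Complex.isPrimitiveRoot_exp n hn.ne'
  set η := Complex.exp (2 * Real.pi * Complex.I / n) with hη_def
  obtain ⟨z, hz⟩ := hη.isUnit hn.ne'
  have key := ev_identity h z (Units.mk0 (2 : ℂ) two_ne_zero)
  rw [hz, show ((Units.mk0 (2 : ℂ) two_ne_zero : ℂˣ) : ℂ) = (2 : ℂ) from rfl] at key
  have hζ : IsPrimitiveRoot (η ^ α.toNat) k := hη.pow hn (by rw [hn_def, mul_comm])
  have hζsum : ∑ i ∈ range k, (η ^ α.toNat) ^ i = 0 := hζ.geom_sum_eq_zero (by omega)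
  have hza : η ^ α = η ^ α.toNat := by
    rw [← zpow_natCast, Int.toNat_of_nonneg hα.le]
  rw [zpow_zero, mul_one, hza, hζsum, zero_mul] at key
  have h2ne : (1 : ℂ) - 2 ^ (s : ℤ) ≠ 0 := by
    rw [zpow_natCast, sub_ne_zero]
    intro heq
    have h3 : ((2 ^ s : ℕ) : ℂ) = ((1 : ℕ) : ℂ) := by push_cast; rw [← heq]
    have h3' : (2 ^ s : ℕ) = 1 := Nat.cast_injective h3
    have h4 := Nat.one_lt_two_pow_iff.mpr (show s ≠ 0 by omega)
    omega
  have h5 : ∑ i ∈ range r, η ^ i = 0 := by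
    rcases mul_eq_zero.mp key.symm with h6 | h6
    · exact absurd h6 h2ne
    · exact h6
  have h7 : η ^ r = 1 := by
    have := geom_sum_mul η r
    rw [h5, zero_mul] at this
    have h8 := sub_eq_zero.mp this.symm
    exact h8
  exact dvd_trans (dvd_mul_right k α.toNat) ((hη.pow_eq_one_iff_dvd r).mp h7)

lemma caseB {k r s : ℕ} (hk : 2 ≤ k) (hr : 1 ≤ r) {β : ℤ} (hβ : 0 < β) {P' : A}
    (h : (∑ i ∈ range k, sg ((i : ℤ) * 0, (i : ℤ) * β)) * P' = (1 - sg (0, (s : ℤ))) * S r) :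
    k ∣ s := by
  set n := k * β.toNat with hn_def
  have hn : 0 < n := Nat.mul_pos (by omega) (by omega)
  have hη := Complex.isPrimitiveRoot_exp n hn.ne'
  set η := Complex.exp (2 * Real.pi * Complex.I / n) with hη_def
  obtain ⟨w, hw⟩ := hη.isUnit hn.ne'
  have key := ev_identity h 1 w
  rw [hw, Units.val_one] at key
  have hζ : IsPrimitiveRoot (η ^ β.toNat) k := hη.pow hn (by rw [hn_def, mul_comm])
  have hζsum : ∑ i ∈ range k, (η ^ β.toNat) ^ i = 0 := hζ.geom_sum_eq_zero (by omega)
  have hzb : η ^ β = η ^ β.toNat := by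
    rw [← zpow_natCast, Int.toNat_of_nonneg hβ.le]
  rw [one_zpow, one_mul, hzb, hζsum, zero_mul] at key
  simp only [one_pow, Finset.sum_const, Finset.card_range, nsmul_eq_mul, mul_one] at key
  have h5 : η ^ (s : ℤ) = 1 := by
    rcases mul_eq_zero.mp key.symm with h6 | h6
    · rw [sub_eq_zero] at h6
      exact h6.symm
    · exfalso
      rw [Nat.cast_eq_zero] at h6
      omega
  rw [zpow_natCast] at h5
  exact dvd_trans (dvd_mul_right k β.toNat) ((hη.pow_eq_one_iff_dvd s).mp h5)


lemma caseAB {k r s : ℕ} (hk : 2 ≤ k) (hr : 1 ≤ r) (hs : 1 ≤ s) {α β : ℤ}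
    (hα : α ≠ 0) (hβ : β ≠ 0) {P' : A}
    (h : (∑ i ∈ range k, sg ((i : ℤ) * α, (i : ℤ) * β)) * P' = (1 - sg (0, (s : ℤ))) * S r) :
    False := by
  set d := Int.gcd α β with hd_def
  have hd : d ≠ 0 := by
    rw [hd_def, Ne, Int.gcd_eq_zero_iff]
    rintro ⟨h1, _⟩
    exact hα h1
  set n := k * d with hn_def
  have hn : 0 < n := Nat.mul_pos (by omega) (Nat.pos_of_ne_zero hd)
  have hη := Complex.isPrimitiveRoot_exp n hn.ne'
  set η := Complex.exp (2 * Real.pi * Complex.I / n) with hη_def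
  have hηne : η ≠ 0 := hη.ne_zero hn.ne'
  set a := Int.gcdA α β with ha_def
  set b := Int.gcdB α β with hb_def
  have hbez : (d : ℤ) = α * a + β * b := Int.gcd_eq_gcd_ab α β
  set ζ1 := η ^ a with hζ1_def
  set ζ2 := η ^ b with hζ2_def
  have hζ1ne : ζ1 ≠ 0 := zpow_ne_zero _ hηne
  have hζ2ne : ζ2 ≠ 0 := zpow_ne_zero _ hηne
  have hζ : IsPrimitiveRoot (η ^ d) k := hη.pow hn (by rw [hn_def, mul_comm])
  have hζsum : ∑ i ∈ range k, (η ^ d) ^ i = 0 := hζ.geom_sum_eq_zero (by omega)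
  set L := r * β.natAbs with hL_def
  have hLβ : (L : ℤ) = r * |β| := by
    rw [hL_def, Int.abs_eq_natAbs]
    push_cast
    ring
  have hnonneg : ∀ i : ℕ, i < r → 0 ≤ (L : ℤ) + i * β := by
    intro i hi
    have h1 : |(i : ℤ) * β| ≤ ((r : ℤ) - 1) * |β| := by
      rw [abs_mul, abs_of_nonneg (by positivity : (0 : ℤ) ≤ (i : ℤ))]
      exact mul_le_mul_of_nonneg_right (by omega) (abs_nonneg β)
    have h2 := (abs_le.mp h1).1
    have hb1 : 1 ≤ |β| := Int.one_le_abs hβ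
    rw [hLβ]
    nlinarith
  set e : ℕ → ℕ := fun i => ((L : ℤ) + i * β).toNat with he_def
  have he_inj : ∀ i < r, e i = e 0 → i = 0 := by
    intro i hi hee
    have h9 : ((e i : ℕ) : ℤ) = (L : ℤ) + i * β := Int.toNat_of_nonneg (hnonneg i hi)
    have h10 : ((e 0 : ℕ) : ℤ) = (L : ℤ) := by
      show (((L : ℤ) + (0 : ℕ) * β).toNat : ℤ) = (L : ℤ)
      rw [Int.toNat_of_nonneg (hnonneg 0 (by omega))]
      simp
    have h11 : (L : ℤ) + i * β = (L : ℤ) := by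
      rw [← h9, ← h10, hee]
    have h12 : (i : ℤ) * β = 0 := by omega
    rcases mul_eq_zero.mp h12 with h13 | h13
    · exact_mod_cast h13
    · exact absurd h13 hβ
  set p1 : Polynomial ℂ := ∑ i ∈ range r, Polynomial.C (ζ1 ^ i) * Polynomial.X ^ (e i)
    with hp1_def
  have hp1c : p1.coeff (e 0) = 1 := by
    rw [hp1_def, Polynomial.finset_sum_coeff]
    rw [Finset.sum_eq_single_of_mem 0 (Finset.mem_range.mpr (by omega))]
    · simp [Polynomial.coeff_C_mul, Polynomial.coeff_X_pow]
    · intro i hi hne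
      rw [Polynomial.coeff_C_mul, Polynomial.coeff_X_pow, if_neg, mul_zero]
      intro hee
      exact hne (he_inj i (Finset.mem_range.mp hi) hee.symm)
  have hp1 : p1 ≠ 0 := by
    intro hc
    rw [hc, Polynomial.coeff_zero] at hp1c
    exact one_ne_zero hp1c.symm
  set m := (α * (s : ℤ)).natAbs with hm_def
  have hsne : (s : ℤ) ≠ 0 := by
    exact_mod_cast (by omega : (s : ℤ) ≠ 0)
  have hm : 0 < m := by
    rw [hm_def]
    have : α * (s : ℤ) ≠ 0 := mul_ne_zero hα hsne
    omega
  set c : ℂ := if 0 ≤ α * (s : ℤ) then ζ2 ^ ((s : ℤ)) else ζ2 ^ (-(s : ℤ)) with hc_def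
  set p2 : Polynomial ℂ := Polynomial.X ^ m - Polynomial.C c with hp2_def
  have hp2 : p2 ≠ 0 := Polynomial.X_pow_sub_C_ne_zero hm c
  have hfin : ({(0 : ℂ)} ∪ {x | p1.IsRoot x} ∪ {x | p2.IsRoot x}).Finite :=
    ((Set.finite_singleton 0).union (Polynomial.finite_setOf_isRoot hp1)).union
      (Polynomial.finite_setOf_isRoot hp2)
  obtain ⟨t, ht⟩ := hfin.infinite_compl.nonempty
  simp only [Set.mem_compl_iff, Set.mem_union, Set.mem_singleton_iff, Set.mem_setOf_eq,
    not_or] at ht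
  obtain ⟨⟨ht0, htp1⟩, htp2⟩ := ht
  set zc : ℂ := ζ1 * t ^ β with hzc_def
  set wc : ℂ := ζ2 * t ^ (-α) with hwc_def
  have hzc : zc ≠ 0 := mul_ne_zero hζ1ne (zpow_ne_zero _ ht0)
  have hwc : wc ≠ 0 := mul_ne_zero hζ2ne (zpow_ne_zero _ ht0)
  have key := ev_identity h (Units.mk0 zc hzc) (Units.mk0 wc hwc)
  rw [show ((Units.mk0 zc hzc : ℂˣ) : ℂ) = zc from rfl,
    show ((Units.mk0 wc hwc : ℂˣ) : ℂ) = wc from rfl] at key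
  have hu : zc ^ α * wc ^ β = η ^ d := by
    rw [hzc_def, hwc_def, mul_zpow, mul_zpow, hζ1_def, hζ2_def,
      ← zpow_mul, ← zpow_mul, ← zpow_mul, ← zpow_mul]
    rw [mul_mul_mul_comm, ← zpow_add₀ hηne, ← zpow_add₀ ht0]
    have h1 : β * α + -α * β = 0 := by ring
    have h2 : a * α + b * β = (d : ℤ) := by rw [hbez]; ring
    rw [h1, h2, zpow_zero, mul_one, zpow_natCast]
  rw [hu, hζsum, zero_mul] at key
  rcases mul_eq_zero.mp key.symm with h6 | h6
  · rw [sub_eq_zero] at h6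
    apply htp2
    have h7 : ζ2 ^ (s : ℤ) * t ^ (-(α * (s : ℤ))) = 1 := by
      rw [← neg_mul]
      calc ζ2 ^ (s : ℤ) * t ^ (-α * (s : ℤ))
          = (ζ2 * t ^ (-α)) ^ (s : ℤ) := by rw [mul_zpow, ← zpow_mul t]
        _ = 1 := by rw [← hwc_def, ← h6]
    have h9 : t ^ (-(α * (s : ℤ))) = (ζ2 ^ (s : ℤ))⁻¹ :=
      eq_inv_of_mul_eq_one_right h7
    have h8 : t ^ (α * (s : ℤ)) = ζ2 ^ (s : ℤ) := by
      rw [← inv_inv (t ^ (α * (s : ℤ))), ← zpow_neg, h9, inv_inv]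
    show p2.IsRoot t
    rw [hp2_def, Polynomial.IsRoot, Polynomial.eval_sub, Polynomial.eval_pow,
      Polynomial.eval_X, Polynomial.eval_C, sub_eq_zero]
    by_cases hsign : 0 ≤ α * (s : ℤ)
    · rw [hc_def, if_pos hsign, ← h8, ← zpow_natCast t m, hm_def,
        Int.natAbs_of_nonneg hsign]
    · rw [hc_def, if_neg hsign, ← zpow_natCast t m, hm_def,
        Int.ofNat_natAbs_of_nonpos (by omega : α * (s : ℤ) ≤ 0), h9, ← zpow_neg]
  · apply htp1
    show p1.IsRoot t
    rw [hp1_def, Polynomial.IsRoot, Polynomial.eval_finset_sum]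
    simp only [Polynomial.eval_mul, Polynomial.eval_C, Polynomial.eval_pow, Polynomial.eval_X]
    have hterm : ∀ i ∈ range r, ζ1 ^ i * t ^ (e i) = t ^ ((L : ℤ)) * zc ^ i := by
      intro i hi
      have hi' := Finset.mem_range.mp hi
      have h9 : ((e i : ℕ) : ℤ) = (L : ℤ) + i * β := Int.toNat_of_nonneg (hnonneg i hi')
      calc ζ1 ^ i * t ^ (e i) = ζ1 ^ i * t ^ (((e i : ℕ) : ℤ)) := by rw [zpow_natCast]
        _ = ζ1 ^ i * (t ^ ((L : ℤ)) * t ^ ((i : ℤ) * β)) := by rw [h9, zpow_add₀ ht0]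
        _ = t ^ ((L : ℤ)) * (ζ1 ^ i * ((t ^ β) ^ i)) := by
            rw [mul_comm ((i : ℤ)) β, zpow_mul]
            rw [show ((t ^ β) ^ ((i : ℕ) : ℤ)) = (t ^ β) ^ (i : ℕ) from zpow_natCast _ i]
            ring
        _ = t ^ ((L : ℤ)) * zc ^ i := by rw [hzc_def, mul_pow]
    rw [Finset.sum_congr rfl hterm, ← Finset.mul_sum, h6, mul_zero]

end Stmt2Aux

theorem stmt_2 (r s k : ℕ) (hr : 1 ≤ r) (hs : 1 ≤ s) (hk : 1 ≤ k) :
    (∃ a b : FreeGroup (Fin 2),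
        ⁅FreeGroup.of (0 : Fin 2) ^ r, FreeGroup.of (1 : Fin 2) ^ s⁆ = a ^ k * b ^ k)
      ↔ (k ∣ r ∨ k ∣ s) := by
  constructor
  · rintro ⟨a, b, h⟩
    by_cases hk1 : k = 1
    · left; simp [hk1]
    have hk2 : 2 ≤ k := by omega
    obtain ⟨α, β, P', hid⟩ := Stmt2Aux.master r s k hk a b h
    rcases eq_or_ne α 0 with hA | hA
    · rcases eq_or_ne β 0 with hB | hB
      · subst hA; subst hB
        exact (Stmt2Aux.case00 hk2 hr hs hid).elim
      · subst hA
        rcases lt_or_gt_of_ne hB with hBneg | hBpos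
        · obtain ⟨P'', hid2⟩ := Stmt2Aux.flip hid
          rw [neg_zero] at hid2
          exact Or.inr (Stmt2Aux.caseB hk2 hr (by omega) hid2)
        · exact Or.inr (Stmt2Aux.caseB hk2 hr hBpos hid)
    · rcases eq_or_ne β 0 with hB | hB
      · subst hB
        rcases lt_or_gt_of_ne hA with hAneg | hApos
        · obtain ⟨P'', hid2⟩ := Stmt2Aux.flip hid
          rw [neg_zero] at hid2
          exact Or.inl (Stmt2Aux.caseA hk2 hs (by omega) hid2)
        · exact Or.inl (Stmt2Aux.caseA hk2 hs hApos hid)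
      · exact (Stmt2Aux.caseAB hk2 hr hs hA hB hid).elim
  · have hconj : ∀ (g x : FreeGroup (Fin 2)) (n : ℕ), (g * x * g⁻¹) ^ n = g * x ^ n * g⁻¹ := by
      intro g x n
      simpa using map_pow (MulAut.conj g) x n
    rintro (⟨m, rfl⟩ | ⟨m, rfl⟩)
    · refine ⟨FreeGroup.of 0 ^ m,
        FreeGroup.of 1 ^ s * (FreeGroup.of 0 ^ m)⁻¹ * (FreeGroup.of 1 ^ s)⁻¹, ?_⟩
      rw [commutatorElement_def, hconj]
      group
    · refine ⟨FreeGroup.of 0 ^ r * FreeGroup.of 1 ^ m * (FreeGroup.of 0 ^ r)⁻¹,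
        (FreeGroup.of 1 ^ m)⁻¹, ?_⟩
      rw [commutatorElement_def, hconj]
      group
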